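/- arXiv:1611.10340 — 4 statements merged into one kernel-verified Lean document; each statement's English description precedes it below -/
import Mathlib

section
/- Let R be a commutative ring, n a natural number, and M an (n+2)×(n+2) matrix over R. Then det(M) · det(M''), where M'' is the n×n matrix obtained from M by deleting both the first and last rows and the first and last columns, equals det(M minus its first row and first column) · det(M minus its last row and last column) − det(M minus its first row and last column) · det(M minus its last row and first column). (When n = 0 the empty 0×0 determinant is 1.) -/
open Matrix

/-- The equivalence sending `inl 0 ↦ 0`, `inl 1 ↦ last`, `inr k ↦ k.succ.castSucc`. -/
def cornerEquiv (n : ℕ) : Fin 2 ⊕ Fin n ≃ Fin (n + 2) where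
  toFun := Sum.elim (fun t => if t = 0 then 0 else Fin.last (n + 1))
    (fun k => k.succ.castSucc)
  invFun i := if h : 0 < (i : ℕ) ∧ (i : ℕ) < n + 1 then .inr ⟨(i : ℕ) - 1, by omega⟩
    else if (i : ℕ) = 0 then .inl 0 else .inl 1
  left_inv x := by
    rcases x with t | k
    · fin_cases t
      · simp
      · simp
    · have h : 0 < ((k.succ.castSucc : Fin (n + 2)) : ℕ) ∧
          ((k.succ.castSucc : Fin (n + 2)) : ℕ) < n + 1 := by
        simp only [Fin.coe_castSucc, Fin.val_succ]
        omega
      simp [h]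
  right_inv i := by
    by_cases h : 0 < (i : ℕ) ∧ (i : ℕ) < n + 1
    · simp only [h, dif_pos]
      ext
      simp
      omega
    · by_cases h0 : (i : ℕ) = 0
      · simp only [h, dif_neg, not_false_iff, h0, if_pos]
        simp [Fin.ext_iff, h0.symm]
        omega
      · simp only [h, dif_neg, not_false_iff, h0, if_neg]
        simp only [Sum.elim_inl, if_neg (by decide : (1 : Fin 2) ≠ 0)]
        have : (i : ℕ) = n + 1 := by omega
        simp [Fin.ext_iff, this]

theorem desnanot_jacobi_aux
    (R : Type*) [CommRing R] (n : ℕ) (M : Matrix (Fin (n + 2)) (Fin (n + 2)) R) :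
    M.det * (M.det *
      (M.submatrix (fun i : Fin n => i.succ.castSucc)
        (fun j : Fin n => j.succ.castSucc)).det)
    = M.det * ((M.submatrix Fin.succ Fin.succ).det *
        (M.submatrix Fin.castSucc Fin.castSucc).det
      - (M.submatrix Fin.succ Fin.castSucc).det *
          (M.submatrix Fin.castSucc Fin.succ).det) := by
  set e := cornerEquiv n with he
  have her : ∀ k : Fin n, e (.inr k) = k.succ.castSucc := fun k => rfl
  set A := adjugate M with hA
  set B : Matrix (Fin 2) (Fin 2) R := fun i j => A (e (.inl i)) (e (.inl j)) with hB
  set C : Matrix (Fin n) (Fin 2) R := fun i j => A (e (.inr i)) (e (.inl j)) with hC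
  set FB : Matrix (Fin 2 ⊕ Fin n) (Fin 2 ⊕ Fin n) R := fromBlocks B 0 C 1 with hFB
  set N : Matrix (Fin (n + 2)) (Fin (n + 2)) R := FB.submatrix e.symm e.symm with hN
  have hcol : ∀ (k : Fin (n + 2)) (t : Fin 2), FB (e.symm k) (.inl t) = A k (e (.inl t)) := by
    intro k t
    rcases h : e.symm k with s | s
    · have : k = e (.inl s) := by rw [← h, Equiv.apply_symm_apply]
      simp [hFB, fromBlocks, hB, this]
    · have : k = e (.inr s) := by rw [← h, Equiv.apply_symm_apply]
      simp [hFB, fromBlocks, hC, this]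
  have hone : ∀ (k : Fin (n + 2)) (s : Fin n),
      N k (e (.inr s)) = if k = e (.inr s) then 1 else 0 := by
    intro k s
    rw [hN]; simp only [submatrix_apply, Equiv.symm_apply_apply]
    rcases h : e.symm k with u | u
    · have hk : k = e (.inl u) := by rw [← h, Equiv.apply_symm_apply]
      simp [hFB, fromBlocks, hk]
    · have hk : k = e (.inr u) := by rw [← h, Equiv.apply_symm_apply]
      simp [hFB, fromBlocks, one_apply, hk, Equiv.apply_eq_iff_eq]
  have hMN : (M * N).submatrix e e =
      fromBlocks (M.det • (1 : Matrix (Fin 2) (Fin 2) R))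
        (M.submatrix (fun i => e (.inl i)) (fun j => e (.inr j))) 0
        (M.submatrix (fun i : Fin n => i.succ.castSucc)
          (fun j : Fin n => j.succ.castSucc)) := by
    ext a b
    rcases a with i | i <;> rcases b with j | j
    · have h1 : ∀ k, M (e (.inl i)) k * N k (e (.inl j))
          = M (e (.inl i)) k * A k (e (.inl j)) := by
        intro k; rw [hN]; simp only [submatrix_apply, Equiv.symm_apply_apply, hcol]
      simp only [submatrix_apply, mul_apply, h1]
      have h2 := congrFun (congrFun (mul_adjugate M) (e (.inl i))) (e (.inl j))
      simp only [mul_apply, hA] at h2 ⊢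
      rw [h2]
      simp [fromBlocks, one_apply, Matrix.smul_apply, Equiv.apply_eq_iff_eq]
    · simp only [submatrix_apply, mul_apply, hone, mul_ite, mul_one, mul_zero]
      simp [fromBlocks]
    · have h1 : ∀ k, M (e (.inr i)) k * N k (e (.inl j))
          = M (e (.inr i)) k * A k (e (.inl j)) := by
        intro k; rw [hN]; simp only [submatrix_apply, Equiv.symm_apply_apply, hcol]
      simp only [submatrix_apply, mul_apply, h1]
      have h2 := congrFun (congrFun (mul_adjugate M) (e (.inr i))) (e (.inl j))
      simp only [mul_apply, hA] at h2 ⊢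
      rw [h2]
      simp [fromBlocks, one_apply, Matrix.smul_apply]
    · have hri : (Fin.castSucc (Fin.succ i)) = e (.inr i) := rfl
      have hrj : (Fin.castSucc (Fin.succ j)) = e (.inr j) := rfl
      simp only [submatrix_apply, mul_apply, fromBlocks_apply₂₂, hri, hrj, hone,
        mul_ite, mul_one, mul_zero, Finset.sum_ite_eq', Finset.mem_univ, if_pos]
  have hdetMN : (M * N).det = M.det ^ 2 *
      (M.submatrix (fun i : Fin n => i.succ.castSucc)
        (fun j : Fin n => j.succ.castSucc)).det := by
    rw [← det_submatrix_equiv_self e, hMN, det_fromBlocks_zero₂₁, det_smul, det_one]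
    simp [pow_two]
  have hdetN : N.det = B.det := by
    rw [hN, det_submatrix_equiv_self, hFB, det_fromBlocks_zero₁₂, det_one, mul_one]
  have hB00 : B 0 0 = (M.submatrix Fin.succ Fin.succ).det := by
    rw [hB]
    show A 0 0 = _
    rw [hA, adjugate_fin_succ_eq_det_submatrix]
    simp
  have hB11 : B 1 1 = (M.submatrix Fin.castSucc Fin.castSucc).det := by
    rw [hB]
    show A (Fin.last (n + 1)) (Fin.last (n + 1)) = _
    rw [hA, adjugate_fin_succ_eq_det_submatrix]
    simp [← two_mul, pow_mul]
  have hB01 : B 0 1 = (-1 : R) ^ (n + 1) * (M.submatrix Fin.castSucc Fin.succ).det := by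
    rw [hB]
    show A 0 (Fin.last (n + 1)) = _
    rw [hA, adjugate_fin_succ_eq_det_submatrix]
    simp
  have hB10 : B 1 0 = (-1 : R) ^ (n + 1) * (M.submatrix Fin.succ Fin.castSucc).det := by
    rw [hB]
    show A (Fin.last (n + 1)) 0 = _
    rw [hA, adjugate_fin_succ_eq_det_submatrix]
    simp
  have hBdet : B.det = (M.submatrix Fin.succ Fin.succ).det *
        (M.submatrix Fin.castSucc Fin.castSucc).det
      - (M.submatrix Fin.succ Fin.castSucc).det *
          (M.submatrix Fin.castSucc Fin.succ).det := by
    rw [det_fin_two, hB00, hB11, hB01, hB10]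
    have hsq : ((-1 : R) ^ (n + 1)) * ((-1 : R) ^ (n + 1)) = 1 := by
      rw [← pow_add]
      exact Even.neg_one_pow ⟨n + 1, by ring⟩
    linear_combination (-((M.submatrix Fin.castSucc Fin.succ).det *
      (M.submatrix Fin.succ Fin.castSucc).det)) * hsq
  calc M.det * (M.det *
      (M.submatrix (fun i : Fin n => i.succ.castSucc)
        (fun j : Fin n => j.succ.castSucc)).det)
      = (M * N).det := by rw [hdetMN]; ring
    _ = M.det * N.det := by rw [det_mul]
    _ = _ := by rw [hdetN, hBdet]

/-- The Desnanot–Jacobi (Dodgson condensation) identity over a commutative ring. -/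
theorem desnanot_jacobi
    (R : Type*) [CommRing R] (n : ℕ) (M : Matrix (Fin (n + 2)) (Fin (n + 2)) R) :
    M.det *
      (M.submatrix (fun i : Fin n => i.succ.castSucc)
        (fun j : Fin n => j.succ.castSucc)).det
    = (M.submatrix Fin.succ Fin.succ).det *
        (M.submatrix Fin.castSucc Fin.castSucc).det
      - (M.submatrix Fin.succ Fin.castSucc).det *
          (M.submatrix Fin.castSucc Fin.succ).det := by
  let P := MvPolynomial (Fin (n + 2) × Fin (n + 2)) ℤ
  let G : Matrix (Fin (n + 2)) (Fin (n + 2)) P := fun i j => MvPolynomial.X (i, j)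
  have hGdet : G.det ≠ 0 := by
    intro h
    have h2 := congrArg (MvPolynomial.eval (fun p : Fin (n + 2) × Fin (n + 2) =>
      if p.1 = p.2 then (1 : ℤ) else 0)) h
    rw [RingHom.map_det] at h2
    have h3 : (MvPolynomial.eval (fun p : Fin (n + 2) × Fin (n + 2) =>
        if p.1 = p.2 then (1 : ℤ) else 0)).mapMatrix G = 1 := by
      ext i j
      rw [RingHom.mapMatrix_apply, Matrix.map_apply]
      simp [G, one_apply, RingHom.mapMatrix_apply]
    rw [h3] at h2
    simp at h2
  have hgen := mul_left_cancel₀ hGdet (desnanot_jacobi_aux P n G)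
  let φ : P →+* R := MvPolynomial.eval₂Hom (Int.castRingHom R) (fun p => M p.1 p.2)
  have hsub : ∀ {m : ℕ} (f g : Fin m → Fin (n + 2)),
      φ ((G.submatrix f g).det) = ((M.submatrix f g).det) := by
    intro m f g
    rw [RingHom.map_det]
    congr 1
    ext i j
    simp only [RingHom.mapMatrix_apply, Matrix.map_apply, submatrix_apply]
    exact MvPolynomial.eval₂Hom_X' _ _ _
  have hMG : φ (G.det) = M.det := by
    rw [RingHom.map_det]
    congr 1
    ext i j
    simp only [RingHom.mapMatrix_apply, Matrix.map_apply, submatrix_apply]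
    exact MvPolynomial.eval₂Hom_X' _ _ _
  have h := congrArg φ hgen
  rw [_root_.map_mul, map_sub, _root_.map_mul, _root_.map_mul, hMG, hsub, hsub, hsub, hsub, hsub] at h
  exact h
end

section
/- Let R be a commutative ring and c : ℤ × ℤ → R. For integers k ≥ 1 and α, β ∈ ℤ define τ_k^{(α,β)} = det of the k×k matrix whose (i,j) entry (0 ≤ i,j ≤ k−1) is c(−β+j, α+i); set τ_0^{(α,β)} = 1 and τ_{−1}^{(α,β)} = 0. Then for all k ≥ 0 and all α, β ∈ ℤ: τ_{k+1}^{(α,β+1)} · τ_{k−1}^{(α+1,β)} = τ_k^{(α+1,β)} · τ_k^{(α,β+1)} − τ_k^{(α,β)} · τ_k^{(α+1,β+1)}. -/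
set_option linter.unusedSectionVars false
set_option linter.unusedTactic false
set_option linter.unreachableTactic false

open Matrix

namespace Tau2TAux

variable {R : Type*} [CommRing R] {n : ℕ}

/-- Auxiliary matrix: first and last columns of the adjugate, identity in between. -/
noncomputable def djB (M : Matrix (Fin (n+2)) (Fin (n+2)) R) :
    Matrix (Fin (n+2)) (Fin (n+2)) R :=
  Matrix.of fun i j =>
    if j = 0 then M.adjugate i 0
    else if j = Fin.last (n+1) then M.adjugate i (Fin.last (n+1))
    else if i = j then 1 else 0

/-- The product `M * djB M`, computed explicitly. -/
noncomputable def djC (M : Matrix (Fin (n+2)) (Fin (n+2)) R) :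
    Matrix (Fin (n+2)) (Fin (n+2)) R :=
  Matrix.of fun i j =>
    if j = 0 then (if i = 0 then M.det else 0)
    else if j = Fin.last (n+1) then (if i = Fin.last (n+1) then M.det else 0)
    else M i j

lemma det_djB (M : Matrix (Fin (n+2)) (Fin (n+2)) R) :
    (djB M).det = M.adjugate 0 0 * M.adjugate (Fin.last (n+1)) (Fin.last (n+1))
      - M.adjugate 0 (Fin.last (n+1)) * M.adjugate (Fin.last (n+1)) 0 := by
  have hl0 : (Fin.last (n+1)) ≠ (0 : Fin (n+2)) := by
    simp [Fin.ext_iff]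
  set A : Matrix (Fin (n+2)) (Fin 2) R := Matrix.of fun i t =>
    if t = 0 then M.adjugate i 0 - (if i = 0 then 1 else 0)
    else M.adjugate i (Fin.last (n+1)) - (if i = Fin.last (n+1) then 1 else 0) with hA
  set B2 : Matrix (Fin 2) (Fin (n+2)) R := Matrix.of fun t j =>
    if t = 0 then (if j = 0 then (1:R) else 0)
    else (if j = Fin.last (n+1) then (1:R) else 0) with hB2
  have h1 : djB M = 1 + A * B2 := by
    ext i j
    rw [Matrix.add_apply, Matrix.mul_apply, Fin.sum_univ_two]
    simp only [djB, hA, hB2, Matrix.of_apply, Matrix.one_apply]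
    split_ifs <;> simp_all <;> ring
  rw [h1, Matrix.det_one_add_mul_comm]
  have h2 : 1 + B2 * A = Matrix.of fun s t : Fin 2 =>
      if s = 0 then (if t = 0 then M.adjugate 0 0 else M.adjugate 0 (Fin.last (n+1)))
      else (if t = 0 then M.adjugate (Fin.last (n+1)) 0
        else M.adjugate (Fin.last (n+1)) (Fin.last (n+1))) := by
    ext s t
    rw [Matrix.add_apply, Matrix.mul_apply]
    fin_cases s <;> fin_cases t <;>
      simp [hA, hB2, Matrix.one_apply, Finset.sum_ite_eq', hl0]
  rw [h2]
  rw [Matrix.det_fin_two]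
  simp

lemma updateRow_sub_zero (M : Matrix (Fin (n+2)) (Fin (n+2)) R) (v : Fin (n+2) → R)
    (g : Fin (n+1) → Fin (n+2)) :
    (M.updateRow 0 v).submatrix Fin.succ g = M.submatrix Fin.succ g := by
  ext i j; simp [Matrix.updateRow_apply, Fin.succ_ne_zero]

lemma updateRow_sub_last (M : Matrix (Fin (n+2)) (Fin (n+2)) R) (v : Fin (n+2) → R)
    (g : Fin (n+1) → Fin (n+2)) :
    (M.updateRow (Fin.last (n+1)) v).submatrix Fin.castSucc g = M.submatrix Fin.castSucc g := by
  ext i j; simp [Matrix.updateRow_apply, (Fin.castSucc_lt_last i).ne]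

lemma adj_00 (M : Matrix (Fin (n+2)) (Fin (n+2)) R) :
    M.adjugate 0 0 = (M.submatrix Fin.succ Fin.succ).det := by
  rw [Matrix.adjugate_apply, Matrix.det_succ_row_zero, Finset.sum_eq_single 0]
  · simp [updateRow_sub_zero]
  · intro j _ hj; simp [Matrix.updateRow_self, Pi.single_eq_of_ne hj]
  · simp

lemma adj_ll (M : Matrix (Fin (n+2)) (Fin (n+2)) R) :
    M.adjugate (Fin.last (n+1)) (Fin.last (n+1))
      = (M.submatrix Fin.castSucc Fin.castSucc).det := by
  rw [Matrix.adjugate_apply, Matrix.det_succ_row _ (Fin.last (n+1)),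
    Finset.sum_eq_single (Fin.last (n+1))]
  · have : ((-1 : R)) ^ ((Fin.last (n+1) : ℕ) + (Fin.last (n+1) : ℕ)) = 1 :=
      Even.neg_one_pow ⟨n+1, by simp⟩
    simp [this, Fin.succAbove_last, updateRow_sub_last]
  · intro j _ hj; simp [Matrix.updateRow_self, Pi.single_eq_of_ne hj]
  · simp

lemma adj_0l (M : Matrix (Fin (n+2)) (Fin (n+2)) R) :
    M.adjugate 0 (Fin.last (n+1)) = (-1 : R)^(n+1) * (M.submatrix Fin.castSucc Fin.succ).det := by
  rw [Matrix.adjugate_apply, Matrix.det_succ_row _ (Fin.last (n+1)),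
    Finset.sum_eq_single 0]
  · simp [Fin.succAbove_last, updateRow_sub_last, Fin.succAbove_zero]
  · intro j _ hj; simp [Matrix.updateRow_self, Pi.single_eq_of_ne hj]
  · simp

lemma adj_l0 (M : Matrix (Fin (n+2)) (Fin (n+2)) R) :
    M.adjugate (Fin.last (n+1)) 0
      = (-1 : R)^(n+1) * (M.submatrix Fin.succ Fin.castSucc).det := by
  rw [Matrix.adjugate_apply, Matrix.det_succ_row_zero, Finset.sum_eq_single (Fin.last (n+1))]
  · simp [Fin.succAbove_last, updateRow_sub_zero]
  · intro j _ hj; simp [Matrix.updateRow_self, Pi.single_eq_of_ne hj]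
  · simp

lemma mul_djB (M : Matrix (Fin (n+2)) (Fin (n+2)) R) : M * djB M = djC M := by
  ext i j
  rw [Matrix.mul_apply]
  by_cases h0 : j = 0
  · subst h0
    have : ∑ k, M i k * djB M k 0 = (M * M.adjugate) i 0 := by
      rw [Matrix.mul_apply]; simp [djB]
    rw [this, Matrix.mul_adjugate]
    simp [djC, Matrix.one_apply, eq_comm]
  · by_cases hl : j = Fin.last (n+1)
    · subst hl
      have hl0 : (Fin.last (n+1)) ≠ (0 : Fin (n+2)) := by simp [Fin.ext_iff]
      have : ∑ k, M i k * djB M k (Fin.last (n+1))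
          = (M * M.adjugate) i (Fin.last (n+1)) := by
        rw [Matrix.mul_apply]; simp [djB, hl0]
      rw [this, Matrix.mul_adjugate]
      simp [djC, hl0, Matrix.one_apply, eq_comm]
    · simp [djB, djC, h0, hl, mul_ite, Finset.sum_ite_eq' Finset.univ j (fun k => M i k)]

lemma det_djC (M : Matrix (Fin (n+2)) (Fin (n+2)) R) :
    (djC M).det = M.det * (M.det *
      (M.submatrix (fun i : Fin n => i.succ.castSucc) (fun j : Fin n => j.succ.castSucc)).det) := by
  have hl0 : (Fin.last (n+1)) ≠ (0 : Fin (n+2)) := by simp [Fin.ext_iff]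
  rw [Matrix.det_succ_column_zero, Finset.sum_eq_single 0]
  · have h00 : djC M 0 0 = M.det := by simp [djC]
    rw [h00]
    set D := (djC M).submatrix (Fin.succAbove 0) Fin.succ with hD
    rw [Matrix.det_succ_column D (Fin.last n), Finset.sum_eq_single (Fin.last n)]
    · have hsign : ((-1 : R)) ^ ((Fin.last n : ℕ) + (Fin.last n : ℕ)) = 1 :=
        Even.neg_one_pow ⟨n, by simp⟩
      have hDll : D (Fin.last n) (Fin.last n) = M.det := by
        simp [hD, djC, Fin.succ_last, hl0]
      have hsub : D.submatrix ((Fin.last n).succAbove) ((Fin.last n).succAbove)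
          = M.submatrix (fun i : Fin n => i.succ.castSucc) (fun j : Fin n => j.succ.castSucc) := by
        rw [Fin.succAbove_last]
        ext i j
        have h1 : (Fin.castSucc j).succ ≠ (0 : Fin (n+2)) := Fin.succ_ne_zero _
        have h2 : (Fin.castSucc j).succ ≠ Fin.last (n+1) := by
          rw [Fin.succ_castSucc]; exact (Fin.castSucc_lt_last _).ne
        simp [hD, djC, Fin.succAbove_zero, h1, h2, Fin.succ_castSucc, Fin.succ_ne_zero, -Fin.castSucc_succ,
          (Fin.castSucc_lt_last i.succ).ne, (Fin.castSucc_lt_last j.succ).ne]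
      rw [hsign, hDll, hsub]
      simp
    · intro i _ hi
      have : D i (Fin.last n) = 0 := by
        have h1 : (Fin.last n).succ = Fin.last (n+1) := Fin.succ_last n
        have h2 : (Fin.succAbove 0 i) ≠ Fin.last (n+1) := by
          rw [Fin.succAbove_zero]
          intro h
          exact hi (by simpa [← Fin.succ_last, Fin.succ_inj] using h)
        simp [hD, djC, h1, h2, hl0, hi]
      rw [this]
      ring
    · simp
  · intro i _ hi
    have : djC M i 0 = 0 := by simp [djC, hi]
    simp [this]
  · simp

lemma pre_dj (M : Matrix (Fin (n+2)) (Fin (n+2)) R) :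
    M.det * (M.det *
      (M.submatrix (fun i : Fin n => i.succ.castSucc) (fun j : Fin n => j.succ.castSucc)).det)
    = M.det * ((M.submatrix Fin.succ Fin.succ).det * (M.submatrix Fin.castSucc Fin.castSucc).det
      - (M.submatrix Fin.castSucc Fin.succ).det * (M.submatrix Fin.succ Fin.castSucc).det) := by
  have h := Matrix.det_mul M (djB M)
  rw [mul_djB, det_djC, det_djB, adj_00, adj_ll, adj_0l, adj_l0] at h
  have hs : ((-1:R)^(n+1)) * ((-1:R)^(n+1)) = 1 := by
    rw [← pow_add]; exact Even.neg_one_pow ⟨n+1, by ring⟩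
  linear_combination h - M.det * (M.submatrix Fin.castSucc Fin.succ).det *
    (M.submatrix Fin.succ Fin.castSucc).det * hs

lemma dj (M : Matrix (Fin (n+2)) (Fin (n+2)) R) :
    M.det * (M.submatrix (fun i : Fin n => i.succ.castSucc) (fun j : Fin n => j.succ.castSucc)).det
    = (M.submatrix Fin.succ Fin.succ).det * (M.submatrix Fin.castSucc Fin.castSucc).det
      - (M.submatrix Fin.castSucc Fin.succ).det * (M.submatrix Fin.succ Fin.castSucc).det := by
  set X : Matrix (Fin (n+2)) (Fin (n+2)) (MvPolynomial (Fin (n+2) × Fin (n+2)) ℤ) :=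
    Matrix.of fun i j => MvPolynomial.X (i, j) with hXdef
  have hX : X.det ≠ 0 := by
    intro h
    have h2 := congrArg
      (MvPolynomial.eval (fun p : Fin (n+2) × Fin (n+2) => if p.1 = p.2 then (1:ℤ) else 0)) h
    rw [RingHom.map_det] at h2
    have h1 : (MvPolynomial.eval
        (fun p : Fin (n+2) × Fin (n+2) => if p.1 = p.2 then (1:ℤ) else 0)).mapMatrix X = 1 := by
      ext i j
      simp [hXdef, Matrix.one_apply, RingHom.mapMatrix_apply]
    rw [h1] at h2
    simp at h2
  have hgen := mul_left_cancel₀ hX (pre_dj X)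
  have hφ := congrArg (MvPolynomial.eval₂Hom (Int.castRingHom R)
    (fun p : Fin (n+2) × Fin (n+2) => M p.1 p.2)) hgen
  set φ := MvPolynomial.eval₂Hom (Int.castRingHom R)
    (fun p : Fin (n+2) × Fin (n+2) => M p.1 p.2) with hφdef
  have hmap : X.map φ = M := by
    ext i j
    simp [hXdef, hφdef]
  simp only [_root_.map_mul, map_sub, RingHom.map_det, RingHom.mapMatrix_apply,
    ← Matrix.submatrix_map, hmap] at hφ
  exact hφ

end Tau2TAux

/-- The `GL∞^(2)` tau-function: the `k × k` determinant with `(i,j)` entry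
`c (-β + j, α + i)` for `k ≥ 0` (so `τ_0 = 1`), and `0` for `k < 0`. -/
noncomputable def tau2T {R : Type*} [CommRing R] (c : ℤ × ℤ → R) (k α β : ℤ) : R :=
  if k < 0 then 0
  else Matrix.det
    (Matrix.of fun i j : Fin k.toNat => c (-β + ((j : ℕ) : ℤ), α + ((i : ℕ) : ℤ)))

lemma tau2T_natCast {R : Type*} [CommRing R] (c : ℤ × ℤ → R) (m : ℕ) (α β : ℤ) :
    tau2T c (m : ℤ) α β
      = Matrix.det (Matrix.of fun i j : Fin m => c (-β + ((j : ℕ) : ℤ), α + ((i : ℕ) : ℤ))) := by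
  rw [tau2T, if_neg (by omega)]
  rfl

/-- The tau-functions `τ_k^{(α,β)}` satisfy the 2T-system (the type A T-system). -/
theorem tau2T_system
    (R : Type*) [CommRing R] (c : ℤ × ℤ → R) :
    ∀ k : ℤ, 0 ≤ k → ∀ α β : ℤ,
      tau2T c (k + 1) α (β + 1) * tau2T c (k - 1) (α + 1) β
      = tau2T c k (α + 1) β * tau2T c k α (β + 1)
        - tau2T c k α β * tau2T c k (α + 1) (β + 1) := by
  intro k hk α β
  lift k to ℕ using hk
  cases k with
  | zero =>
    have hm1 : tau2T c ((0:ℕ) - 1) (α + 1) β = 0 := by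
      norm_num [tau2T]
    have h0 : ∀ α' β' : ℤ, tau2T c ((0:ℕ) : ℤ) α' β' = 1 := by
      intro α' β'
      rw [tau2T_natCast]
      exact Matrix.det_fin_zero
    rw [hm1, h0, h0, h0, h0]
    ring
  | succ n =>
    have e1 : (((n+1:ℕ)) : ℤ) + 1 = (((n+2:ℕ)) : ℤ) := by push_cast; ring
    have e2 : (((n+1:ℕ)) : ℤ) - 1 = ((n:ℕ) : ℤ) := by push_cast; ring
    rw [e1, e2, tau2T_natCast, tau2T_natCast, tau2T_natCast, tau2T_natCast, tau2T_natCast,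
      tau2T_natCast]
    set M : Matrix (Fin (n+2)) (Fin (n+2)) R :=
      Matrix.of fun i j : Fin (n+2) => c (-(β+1) + ((j : ℕ) : ℤ), α + ((i : ℕ) : ℤ)) with hM
    have h := Tau2TAux.dj M
    have hmid : (Matrix.of fun i j : Fin n => c (-β + ((j : ℕ) : ℤ), (α+1) + ((i : ℕ) : ℤ)))
        = M.submatrix (fun i : Fin n => i.succ.castSucc) (fun j : Fin n => j.succ.castSucc) := by
      ext i j
      simp only [Matrix.submatrix_apply, Matrix.of_apply, hM, Fin.coe_castSucc, Fin.val_succ]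
      congr 1
      simp only [Prod.ext_iff]
      constructor <;> push_cast <;> ring
    have hss : (Matrix.of fun i j : Fin (n+1) => c (-β + ((j : ℕ) : ℤ), (α+1) + ((i : ℕ) : ℤ)))
        = M.submatrix Fin.succ Fin.succ := by
      ext i j
      simp only [Matrix.submatrix_apply, Matrix.of_apply, hM, Fin.val_succ]
      congr 1
      simp only [Prod.ext_iff]
      constructor <;> push_cast <;> ring
    have hcc : (Matrix.of fun i j : Fin (n+1) => c (-(β+1) + ((j : ℕ) : ℤ), α + ((i : ℕ) : ℤ)))
        = M.submatrix Fin.castSucc Fin.castSucc := by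
      ext i j
      simp only [Matrix.submatrix_apply, Matrix.of_apply, hM, Fin.coe_castSucc]
    have hcs : (Matrix.of fun i j : Fin (n+1) => c (-β + ((j : ℕ) : ℤ), α + ((i : ℕ) : ℤ)))
        = M.submatrix Fin.castSucc Fin.succ := by
      ext i j
      simp only [Matrix.submatrix_apply, Matrix.of_apply, hM, Fin.coe_castSucc, Fin.val_succ]
      congr 1
      simp only [Prod.ext_iff]
      constructor <;> push_cast <;> ring
    have hsc : (Matrix.of fun i j : Fin (n+1) => c (-(β+1) + ((j : ℕ) : ℤ), (α+1) + ((i : ℕ) : ℤ)))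
        = M.submatrix Fin.succ Fin.castSucc := by
      ext i j
      simp only [Matrix.submatrix_apply, Matrix.of_apply, hM, Fin.coe_castSucc, Fin.val_succ]
      congr 1
      simp only [Prod.ext_iff]
      constructor <;> push_cast <;> ring
    rw [hmid, hss, hcc, hcs, hsc]
    exact h
end

section
/- Let R be a commutative ring and c : ℤ → R. For integers k ≥ 1 and α ∈ ℤ define the Hankel determinant τ_k^{(α)} = det of the k×k matrix whose (i,j) entry (0 ≤ i,j ≤ k−1) is c(α+i+j); set τ_0^{(α)} = 1 and τ_{−1}^{(α)} = 0. Then for all k ≥ 0 and all α ∈ ℤ: (τ_k^{(α)})² = τ_k^{(α−1)} · τ_k^{(α+1)} − τ_{k+1}^{(α−1)} · τ_{k−1}^{(α+1)}. -/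
/-- The `GL₂`-hat tau-function: the shifted `k × k` Hankel determinant with `(i,j)`
entry `c (α + i + j)` for `k ≥ 0` (so `τ_0 = 1`), and `0` for `k < 0`. -/
noncomputable def tau2Q {R : Type*} [CommRing R] (c : ℤ → R) (k α : ℤ) : R :=
  if k < 0 then 0
  else Matrix.det
    (Matrix.of fun i j : Fin k.toNat => c (α + ((i : ℕ) : ℤ) + ((j : ℕ) : ℤ)))

section DesnanotJacobi

set_option linter.unusedSectionVars false

open Matrix

variable {R : Type*} [CommRing R] {m : Type*} [DecidableEq m] [Fintype m]

private lemma myUpdateColumn_comm (M : Matrix m m R) {i j : m} (h : i ≠ j) (u w : m → R) :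
    (M.updateCol i u).updateCol j w = (M.updateCol j w).updateCol i u := by
  ext a b
  by_cases hbj : b = j <;> by_cases hbi : b = i <;>
    simp_all [Matrix.updateCol_apply]

private lemma myMul_updateCol (M N : Matrix m m R) (j : m) (w : m → R) :
    M * (N.updateCol j w) = (M * N).updateCol j (M *ᵥ w) := by
  ext a b
  by_cases hb : b = j <;>
    simp [Matrix.mul_apply, Matrix.updateCol_apply, hb, Matrix.mulVec, dotProduct]

private lemma myDet_updateCol_eq_sum (N : Matrix m m R) (j : m) (w : m → R) :
    (N.updateCol j w).det = ∑ b, w b * (N.updateCol j (Pi.single b 1)).det := by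
  rw [← Matrix.cramer_apply]
  have hw : w = ∑ b, w b • (Pi.single b 1 : m → R) := by
    ext k; simp [Pi.single_apply]
  conv_lhs => rw [hw]
  rw [map_sum]
  simp [Matrix.cramer_apply, Finset.sum_apply, Pi.single_apply]

private lemma myAuxZero1 {i j : m} (h : i ≠ j) {b : m} (hbj : b ≠ j) (hbi : b ≠ i) (a' : m) :
    (((1 : Matrix m m R).updateCol i (Pi.single a' 1)).updateCol j (Pi.single b 1)).det
      = 0 := by
  refine Matrix.det_zero_of_column_eq (Ne.symm hbj) fun k => ?_
  simp [Matrix.updateCol_apply, hbj, hbi, Pi.single_apply, Matrix.one_apply, eq_comm]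

private lemma myAuxZero2 {i j : m} (h : i ≠ j) {a : m} (hai : a ≠ i) (haj : a ≠ j) (b' : m) :
    (((1 : Matrix m m R).updateCol i (Pi.single a 1)).updateCol j (Pi.single b' 1)).det
      = 0 := by
  refine Matrix.det_zero_of_column_eq (Ne.symm hai) fun k => ?_
  simp [Matrix.updateCol_apply, hai, haj, h, Ne.symm h, Pi.single_apply, Matrix.one_apply,
    eq_comm]

private lemma myDet_two_singles {i j : m} (h : i ≠ j) (a b : m) :
    (((1 : Matrix m m R).updateCol i (Pi.single a 1)).updateCol j (Pi.single b 1)).det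
    = (if a = i ∧ b = j then (1 : R) else 0) - (if a = j ∧ b = i then 1 else 0) := by
  by_cases hai : a = i
  · subst hai
    by_cases hbj : b = j
    · subst hbj
      have h1 : ((1 : Matrix m m R).updateCol a (Pi.single a 1)) = 1 := by
        have : (Pi.single a 1 : m → R) = fun k => (1 : Matrix m m R) k a := by
          funext k; simp [Pi.single_apply, Matrix.one_apply]
        rw [this, Matrix.updateCol_eq_self]
      have h2 : ((1 : Matrix m m R).updateCol b (Pi.single b 1)) = 1 := by
        have : (Pi.single b 1 : m → R) = fun k => (1 : Matrix m m R) k b := by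
          funext k; simp [Pi.single_apply, Matrix.one_apply]
        rw [this, Matrix.updateCol_eq_self]
      rw [h1, h2, Matrix.det_one]
      simp [h, Ne.symm h]
    · by_cases hba : b = a
      · subst hba
        rw [Matrix.det_zero_of_column_eq h fun k => by
          simp [Matrix.updateCol_apply, h, Ne.symm h]]
        simp [hbj, Ne.symm h]
      · rw [myAuxZero1 h hbj hba]
        simp [hbj, fun p : b = a => hba p]
  · by_cases haj : a = j
    · by_cases hbi : b = i
      · have hM : (((1 : Matrix m m R).updateCol i (Pi.single a 1)).updateCol j
              (Pi.single b 1))ᵀ = (Equiv.toPEquiv (Equiv.swap i j)).toMatrix := by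
          ext c k
          by_cases hci : c = i <;> by_cases hcj : c = j <;>
            simp_all [Matrix.transpose_apply, Matrix.updateCol_apply, PEquiv.toMatrix,
              Equiv.toPEquiv_apply, Equiv.swap_apply_def, Pi.single_apply, Matrix.one_apply,
              eq_comm]
        rw [← Matrix.det_transpose, hM, Matrix.det_permutation, Equiv.Perm.sign_swap h]
        simp [hai, haj, hbi, h]
      · by_cases hbj2 : b = j
        · rw [Matrix.det_zero_of_column_eq h fun k => by
            simp [Matrix.updateCol_apply, h, Ne.symm h, haj, hbj2]]
          simp [hai, hbi]
        · rw [myAuxZero1 h hbj2 hbi]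
          simp [hai, hbi]
    · rw [myAuxZero2 (h := h) hai haj b]
      simp [hai, haj]

private lemma myDet_double_update {i j : m} (h : i ≠ j) (u w : m → R) :
    (((1 : Matrix m m R).updateCol i u).updateCol j w).det = u i * w j - u j * w i := by
  rw [myDet_updateCol_eq_sum]
  have key : ∀ b, ((((1 : Matrix m m R).updateCol i u).updateCol j (Pi.single b 1)).det)
      = u i * (if b = j then 1 else 0) - u j * (if b = i then 1 else 0) := by
    intro b
    rw [myUpdateColumn_comm _ h, myDet_updateCol_eq_sum]
    have e2 : ∀ a,
        ((((1 : Matrix m m R).updateCol j (Pi.single b 1)).updateCol i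
            (Pi.single a 1)).det)
        = (if a = i ∧ b = j then (1 : R) else 0) - (if a = j ∧ b = i then 1 else 0) := by
      intro a
      rw [myUpdateColumn_comm _ (Ne.symm h)]
      exact myDet_two_singles h a b
    simp only [e2]
    simp [mul_sub, ite_and, Finset.sum_sub_distrib, mul_ite, Finset.sum_ite_eq']
  simp only [key]
  simp [mul_sub, mul_ite, Finset.sum_sub_distrib, Finset.sum_ite_eq', mul_comm]

private lemma myDet_double_single {n : ℕ} (A : Matrix (Fin (n + 2)) (Fin (n + 2)) R) :
    ((A.updateCol 0 (Pi.single 0 1)).updateCol (Fin.last (n + 1))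
        (Pi.single (Fin.last (n + 1)) 1)).det
    = (A.submatrix (fun i : Fin n => i.castSucc.succ) (fun i : Fin n => i.castSucc.succ)).det := by
  set D := (A.updateCol 0 (Pi.single 0 1)).updateCol (Fin.last (n + 1))
      (Pi.single (Fin.last (n + 1)) 1) with hD
  have h0L : (0 : Fin (n + 2)) ≠ Fin.last (n + 1) := by
    simp [Fin.ext_iff]
  have hcol0 : ∀ i, D i 0 = if i = 0 then (1 : R) else 0 := by
    intro i
    simp [hD, Matrix.updateCol_apply, h0L, Ne.symm h0L, Pi.single_apply]
  rw [Matrix.det_succ_column_zero]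
  rw [Finset.sum_eq_single 0]
  · rw [hcol0]
    simp only [if_pos rfl, Fin.val_zero, pow_zero, one_mul, mul_one]
    have hE : ∀ i, (D.submatrix (Fin.succAbove 0) Fin.succ) i (Fin.last n)
        = if i = Fin.last n then (1 : R) else 0 := by
      intro i
      simp only [Matrix.submatrix_apply, Fin.succAbove_zero]
      have : (Fin.last n).succ = Fin.last (n + 1) := by
        simp [Fin.ext_iff]
      rw [this, hD]
      simp [Matrix.updateCol_apply, Pi.single_apply, Fin.succ_inj, Fin.ext_iff]
    rw [Matrix.det_succ_column _ (Fin.last n), Finset.sum_eq_single (Fin.last n)]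
    · rw [hE]
      simp only [if_pos rfl, mul_one, Fin.val_last]
      have hsign : ((-1 : R)) ^ ((n : ℕ) + (n : ℕ)) = 1 :=
        Even.neg_one_pow ⟨n, by ring⟩
      rw [hsign, one_mul, Fin.succAbove_last]
      have hmat : (D.submatrix (Fin.succAbove 0) Fin.succ).submatrix Fin.castSucc Fin.castSucc
          = A.submatrix (fun i : Fin n => i.castSucc.succ) (fun i : Fin n => i.castSucc.succ) := by
        ext i j
        have hne0 : ∀ x : Fin n, (x.castSucc.succ : Fin (n+2)) ≠ 0 := fun x => Fin.succ_ne_zero _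
        have hneL : ∀ x : Fin n, (x.castSucc.succ : Fin (n+2)) ≠ Fin.last (n+1) := by
          intro x
          simp [Fin.ext_iff]
          omega
        simp [hD, Matrix.submatrix_apply, Matrix.updateCol_apply, hneL, hne0,
          Fin.succAbove_zero]
      rw [hmat]
      simp
    · intro b _ hb
      rw [hE, if_neg hb]
      ring
    · simp
  · intro b _ hb
    rw [hcol0, if_neg hb]
    ring
  · simp

private lemma myDJ_mul {n : ℕ} (A : Matrix (Fin (n + 2)) (Fin (n + 2)) R) :
    A.det * (adjugate A 0 0 * adjugate A (Fin.last (n + 1)) (Fin.last (n + 1))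
        - adjugate A (Fin.last (n + 1)) 0 * adjugate A 0 (Fin.last (n + 1)))
    = A.det * (A.det *
        (A.submatrix (fun i : Fin n => i.castSucc.succ)
          (fun i : Fin n => i.castSucc.succ)).det) := by
  have h0L : (0 : Fin (n + 2)) ≠ Fin.last (n + 1) := by
    simp [Fin.ext_iff]
  set u : Fin (n + 2) → R := fun i => adjugate A i 0 with hu
  set w : Fin (n + 2) → R := fun i => adjugate A i (Fin.last (n + 1)) with hw
  set B : Matrix (Fin (n + 2)) (Fin (n + 2)) R :=
    ((1 : Matrix _ _ R).updateCol 0 u).updateCol (Fin.last (n + 1)) w with hB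
  have hdetB : B.det = adjugate A 0 0 * adjugate A (Fin.last (n + 1)) (Fin.last (n + 1))
      - adjugate A (Fin.last (n + 1)) 0 * adjugate A 0 (Fin.last (n + 1)) :=
    myDet_double_update h0L u w
  have hAu : A *ᵥ u = A.det • (Pi.single 0 1 : Fin (n + 2) → R) := by
    funext i
    have h1 : (A * adjugate A) i 0 = (A.det • (1 : Matrix (Fin (n+2)) (Fin (n+2)) R)) i 0 := by
      rw [mul_adjugate]
    simpa [Matrix.mulVec, dotProduct, Matrix.mul_apply, Matrix.one_apply,
      Pi.single_apply, hu] using h1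
  have hAw : A *ᵥ w = A.det • (Pi.single (Fin.last (n + 1)) 1 : Fin (n + 2) → R) := by
    funext i
    have h1 : (A * adjugate A) i (Fin.last (n + 1))
        = (A.det • (1 : Matrix (Fin (n+2)) (Fin (n+2)) R)) i (Fin.last (n + 1)) := by
      rw [mul_adjugate]
    simpa [Matrix.mulVec, dotProduct, Matrix.mul_apply, Matrix.one_apply,
      Pi.single_apply, hw] using h1
  have hAB : A * B = (A.updateCol 0 (A.det • (Pi.single 0 1 : Fin (n+2) → R))).updateCol
      (Fin.last (n + 1)) (A.det • (Pi.single (Fin.last (n+1)) 1 : Fin (n+2) → R)) := by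
    rw [hB, myMul_updateCol, myMul_updateCol, Matrix.mul_one, hAu, hAw]
  have hdetAB : (A * B).det = A.det * (A.det *
      (A.submatrix (fun i : Fin n => i.castSucc.succ)
        (fun i : Fin n => i.castSucc.succ)).det) := by
    rw [hAB, Matrix.det_updateCol_smul, myUpdateColumn_comm _ h0L,
      Matrix.det_updateCol_smul, myUpdateColumn_comm _ (Ne.symm h0L),
      myDet_double_single]
  calc A.det * (adjugate A 0 0 * adjugate A (Fin.last (n + 1)) (Fin.last (n + 1))
        - adjugate A (Fin.last (n + 1)) 0 * adjugate A 0 (Fin.last (n + 1)))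
      = A.det * B.det := by rw [hdetB]
    _ = (A * B).det := (Matrix.det_mul A B).symm
    _ = _ := hdetAB

private lemma myDJ_mul2 {n : ℕ} (A : Matrix (Fin (n + 2)) (Fin (n + 2)) R) :
    A.det * ((A.submatrix Fin.succ Fin.succ).det * (A.submatrix Fin.castSucc Fin.castSucc).det
      - (A.submatrix Fin.succ Fin.castSucc).det * (A.submatrix Fin.castSucc Fin.succ).det)
    = A.det * (A.det *
        (A.submatrix (fun i : Fin n => i.castSucc.succ)
          (fun i : Fin n => i.castSucc.succ)).det) := by
  have h := myDJ_mul A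
  rw [adjugate_fin_succ_eq_det_submatrix, adjugate_fin_succ_eq_det_submatrix,
    adjugate_fin_succ_eq_det_submatrix, adjugate_fin_succ_eq_det_submatrix] at h
  simp only [Fin.succAbove_zero, Fin.succAbove_last, Fin.val_zero, Fin.val_last] at h
  rw [← h]
  have hsgn2 : ((-1 : R)) ^ ((n + 1) + (n + 1)) = 1 := Even.neg_one_pow ⟨n + 1, by ring⟩
  have hsgn3 : ((-1 : R)) ^ ((0 + (n + 1) : ℕ)) * (-1 : R) ^ (((n + 1) + 0 : ℕ)) = 1 := by
    rw [← pow_add]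
    exact Even.neg_one_pow ⟨n + 1, by ring⟩
  rw [hsgn2]
  linear_combination (A.det * (A.submatrix Fin.succ Fin.castSucc).det *
    (A.submatrix Fin.castSucc Fin.succ).det) * hsgn3

/-- The Desnanot–Jacobi identity (Dodgson condensation). -/
private lemma myDJ {n : ℕ} (A : Matrix (Fin (n + 2)) (Fin (n + 2)) R) :
    (A.submatrix Fin.succ Fin.succ).det * (A.submatrix Fin.castSucc Fin.castSucc).det
      - (A.submatrix Fin.succ Fin.castSucc).det * (A.submatrix Fin.castSucc Fin.succ).det
    = A.det * (A.submatrix (fun i : Fin n => i.castSucc.succ)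
          (fun i : Fin n => i.castSucc.succ)).det := by
  set σ := Fin (n + 2) × Fin (n + 2)
  set X : Matrix (Fin (n + 2)) (Fin (n + 2)) (MvPolynomial σ ℤ) :=
    Matrix.of fun i j => MvPolynomial.X (i, j) with hXdef
  have hX : X.det ≠ 0 := by
    intro h0
    have h1 := congrArg (MvPolynomial.eval (fun p : σ => if p.1 = p.2 then (1 : ℤ) else 0)) h0
    rw [RingHom.map_det] at h1
    have h2 : X.map (MvPolynomial.eval fun p : σ => if p.1 = p.2 then (1 : ℤ) else 0)
        = (1 : Matrix (Fin (n + 2)) (Fin (n + 2)) ℤ) := by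
      ext i j
      simp [hXdef, Matrix.one_apply]
    rw [RingHom.mapMatrix_apply, h2, Matrix.det_one] at h1
    simp at h1
  have hgen : (X.submatrix Fin.succ Fin.succ).det *
        (X.submatrix Fin.castSucc Fin.castSucc).det
      - (X.submatrix Fin.succ Fin.castSucc).det * (X.submatrix Fin.castSucc Fin.succ).det
      = X.det * (X.submatrix (fun i : Fin n => i.castSucc.succ)
          (fun i : Fin n => i.castSucc.succ)).det :=
    mul_left_cancel₀ hX (myDJ_mul2 X)
  set φ : MvPolynomial σ ℤ →+* R :=
    MvPolynomial.eval₂Hom (Int.castRingHom R) fun p : σ => A p.1 p.2 with hφ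
  have hmapX : X.map φ = A := by
    ext i j
    simp [hXdef, hφ]
  have hsub : ∀ {p q : ℕ} (r : Fin p → Fin (n + 2)) (c : Fin q → Fin (n + 2)),
      (X.submatrix r c).map φ = A.submatrix r c := by
    intro p q r c
    rw [← Matrix.submatrix_map, hmapX]
  have h3 := congrArg φ hgen
  simp only [map_sub, _root_.map_mul, RingHom.map_det, RingHom.mapMatrix_apply,
    Matrix.submatrix_map, hmapX, hsub] at h3
  exact h3

private lemma tau2Q_natCast {R : Type*} [CommRing R] (c : ℤ → R) (p : ℕ) (β : ℤ) :
    tau2Q c (p : ℤ) β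
      = (Matrix.of fun i j : Fin p => c (β + ((i : ℕ) : ℤ) + ((j : ℕ) : ℤ))).det := by
  rw [tau2Q, if_neg (by omega : ¬ ((p : ℤ) < 0))]
  rfl

end DesnanotJacobi

/-- The Hankel tau-functions `τ_k^{(α)}` satisfy the 2Q-system (the type A Q-system). -/
theorem tau2Q_system
    (R : Type*) [CommRing R] (c : ℤ → R) :
    ∀ k : ℤ, 0 ≤ k → ∀ α : ℤ,
      (tau2Q c k α) ^ 2
      = tau2Q c k (α - 1) * tau2Q c k (α + 1)
        - tau2Q c (k + 1) (α - 1) * tau2Q c (k - 1) (α + 1) := by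
  intro k hk α
  obtain ⟨m, rfl⟩ := Int.eq_ofNat_of_zero_le hk
  cases m with
  | zero =>
      simp only [Nat.cast_zero]
      have t0 : ∀ β, tau2Q c 0 β = 1 := by
        intro β
        rw [tau2Q, if_neg (by omega)]
        exact Matrix.det_fin_zero
      have tneg : tau2Q c (0 - 1 : ℤ) (α + 1) = 0 := by
        rw [tau2Q, if_pos (by omega)]
      rw [t0, t0, t0, tneg, mul_zero, sub_zero, one_mul, one_pow]
  | succ m =>
      set A : Matrix (Fin (m + 2)) (Fin (m + 2)) R :=
        Matrix.of (fun i j : Fin (m + 2) => c ((α - 1) + ((i : ℕ) : ℤ) + ((j : ℕ) : ℤ))) with hA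
      have hDJ := myDJ A
      have e1 : A.submatrix Fin.succ Fin.succ
          = Matrix.of (fun i j : Fin (m + 1) => c ((α + 1) + ((i : ℕ) : ℤ) + ((j : ℕ) : ℤ))) := by
        ext i j
        simp only [Matrix.submatrix_apply, Matrix.of_apply, Fin.val_succ, hA]
        congr 1
        push_cast
        ring
      have e2 : A.submatrix Fin.castSucc Fin.castSucc
          = Matrix.of (fun i j : Fin (m + 1) => c ((α - 1) + ((i : ℕ) : ℤ) + ((j : ℕ) : ℤ))) := by
        ext i j
        simp only [Matrix.submatrix_apply, Matrix.of_apply, Fin.coe_castSucc, hA]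
      have e3 : A.submatrix Fin.succ Fin.castSucc
          = Matrix.of (fun i j : Fin (m + 1) => c (α + ((i : ℕ) : ℤ) + ((j : ℕ) : ℤ))) := by
        ext i j
        simp only [Matrix.submatrix_apply, Matrix.of_apply, Fin.val_succ, Fin.coe_castSucc, hA]
        congr 1
        push_cast
        ring
      have e4 : A.submatrix Fin.castSucc Fin.succ
          = Matrix.of (fun i j : Fin (m + 1) => c (α + ((i : ℕ) : ℤ) + ((j : ℕ) : ℤ))) := by
        ext i j
        simp only [Matrix.submatrix_apply, Matrix.of_apply, Fin.val_succ, Fin.coe_castSucc, hA]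
        congr 1
        push_cast
        ring
      have e5 : A.submatrix (fun i : Fin m => i.castSucc.succ) (fun i : Fin m => i.castSucc.succ)
          = Matrix.of (fun i j : Fin m => c ((α + 1) + ((i : ℕ) : ℤ) + ((j : ℕ) : ℤ))) := by
        ext i j
        simp only [Matrix.submatrix_apply, Matrix.of_apply, Fin.val_succ, Fin.coe_castSucc, hA]
        congr 1
        push_cast
        ring
      rw [e1, e2, e3, e4, e5] at hDJ
      have hk1 : ((m + 1 : ℕ) : ℤ) + 1 = ((m + 2 : ℕ) : ℤ) := by push_cast; ring
      have hk2 : ((m + 1 : ℕ) : ℤ) - 1 = ((m : ℕ) : ℤ) := by push_cast; ring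
      rw [hk1, hk2, tau2Q_natCast, tau2Q_natCast, tau2Q_natCast, tau2Q_natCast, tau2Q_natCast]
      have hAdet : A.det
          = (Matrix.of fun i j : Fin (m + 2) =>
              c ((α - 1) + ((i : ℕ) : ℤ) + ((j : ℕ) : ℤ))).det := by rw [hA]
      rw [hAdet] at hDJ
      linear_combination -hDJ
end

section
/- Let F be a field and let τ assign to each (k,ℓ) ∈ ℤ² and (α,β,γ) ∈ ℤ³ an element τ_{k,ℓ}^{(α,β,γ)} of F. Assume: (i) τ_{k,ℓ}^{(α,β,γ)} = 0 whenever k < 0 or ℓ < 0, and τ_{k,ℓ}^{(α,β,γ)} ≠ 0 whenever k ≥ 0 and ℓ ≥ 0; (ii) τ_{0,ℓ}^{(α,β,γ)} does not depend on α, i.e., τ_{0,ℓ}^{(α,β,γ)} = τ_{0,ℓ}^{(α',β,γ)} for all α, α'; (iii) for all k, ℓ, α, β, γ ∈ ℤ the three three-term relations hold: (A) τ_{k,ℓ−1}^{(α+1,β,γ)} τ_{k,ℓ}^{(α,β,γ)} = τ_{k,ℓ−1}^{(α,β,γ)} τ_{k,ℓ}^{(α+1,β,γ)} + τ_{k+1,ℓ}^{(α,β,γ)}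 τ_{k−1,ℓ−1}^{(α+1,β,γ)}; (B) τ_{k+1,ℓ−1}^{(α,β+1,γ)} τ_{k,ℓ}^{(α,β,γ)} + τ_{k,ℓ−1}^{(α,β,γ)} τ_{k+1,ℓ}^{(α,β+1,γ)} = τ_{k+1,ℓ}^{(α,β,γ)} τ_{k,ℓ−1}^{(α,β+1,γ)}; (C) τ_{k−1,ℓ−1}^{(α,β,γ)} τ_{k,ℓ+1}^{(α,β,γ+1)} + τ_{k−1,ℓ}^{(α,β,γ)} τ_{k,ℓ}^{(α,β,γ+1)} = τ_{k−1,ℓ}^{(α,β,γ+1)} τ_{k,ℓ}^{(α,β,γ)}; and (iv) for all k ≥ 0, ℓ ≥ 0 and all α, β, γ ∈ ℤ the degree-six identity holds: − τ_{k,ℓ−1}^{(α,β,γ)} τ_{k,ℓ}^{(α+1,β,γ)} τ_{k,ℓ}^{(α+1,β+1,γ)} τ_{k,ℓ}^{(α+1,β+1,γ+1)} τ_{k+1,ℓ}^{(α,β+1,γ+1)} τ_{k+2,ℓ+1}^{(α,β,γ+1)} + τ_{k−1,ℓ−1}^{(α+1,β+1,γ)} τ_{k,ℓ}^{(α+1,β,γ)}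 τ_{k+1,ℓ}^{(α,β,γ)} τ_{k+1,ℓ}^{(α,β,γ+1)} τ_{k+1,ℓ}^{(α,β+1,γ+1)} τ_{k+1,ℓ+1}^{(α+1,β+1,γ+1)} − τ_{k−1,ℓ}^{(α+1,β,γ)} τ_{k,ℓ}^{(α+1,β+1,γ+1)} τ_{k+1,ℓ}^{(α,β,γ)} τ_{k+1,ℓ}^{(α,β,γ+1)} τ_{k+1,ℓ}^{(α,β+1,γ+1)} τ_{k+1,ℓ}^{(α+1,β+1,γ)} + τ_{k,ℓ}^{(α,β+1,γ+1)} τ_{k,ℓ}^{(α+1,β,γ)} τ_{k,ℓ}^{(α+1,β+1,γ)} τ_{k+1,ℓ}^{(α,β,γ)} τ_{k+1,ℓ}^{(α,β,γ+1)} τ_{k+1,ℓ}^{(α+1,β+1,γ+1)} + τ_{k,ℓ}^{(α,β,γ+1)} τ_{k,ℓ}^{(α+1,β,γ)} τ_{k,ℓ}^{(α+1,β+1,γ)} τ_{k,ℓ}^{(α+1,β+1,γ+1)} τ_{k+1,ℓ}^{(α,β,γ)} τ_{k+2,ℓ}^{(α,β+1,γ+1)} − τ_{k,ℓ}^{(α,β,γ)}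 τ_{k,ℓ}^{(α+1,β+1,γ)} τ_{k,ℓ}^{(α+1,β+1,γ+1)} τ_{k+1,ℓ}^{(α,β,γ+1)} τ_{k+1,ℓ}^{(α,β+1,γ+1)} τ_{k+1,ℓ}^{(α+1,β,γ)} = 0. Then for all k ≥ 0, ℓ ≥ 0 and all α, β, γ ∈ ℤ the four-term relation holds: τ_{k,ℓ}^{(α,β,γ)} τ_{k,ℓ}^{(α+1,β+1,γ+1)} = τ_{k,ℓ}^{(α+1,β,γ)} τ_{k,ℓ}^{(α,β+1,γ+1)} + τ_{k+1,ℓ+1}^{(α,β+1,γ+1)} τ_{k−1,ℓ−1}^{(α+1,β,γ)} − τ_{k+1,ℓ}^{(α,β+1,γ+1)} τ_{k−1,ℓ}^{(α+1,β,γ)}. -/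
/-- The α-direction four-term 3T-system relation for the `GL∞^(3)` tau-functions,
deduced from vanishing/nonvanishing, α-independence of `τ_{0,ℓ}`, the three
three-term relations, and the degree-six identity. -/
theorem threeT_alpha_four_term
    (F : Type*) [Field F] (τ : ℤ → ℤ → ℤ → ℤ → ℤ → F)
    (hzero : ∀ k ℓ α β γ : ℤ, (k < 0 ∨ ℓ < 0) → τ k ℓ α β γ = 0)
    (hne : ∀ k ℓ α β γ : ℤ, 0 ≤ k → 0 ≤ ℓ → τ k ℓ α β γ ≠ 0)
    (halpha : ∀ ℓ α α' β γ : ℤ, τ 0 ℓ α β γ = τ 0 ℓ α' β γ)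
    (hA : ∀ k ℓ α β γ : ℤ,
      τ k (ℓ - 1) (α + 1) β γ * τ k ℓ α β γ
      = τ k (ℓ - 1) α β γ * τ k ℓ (α + 1) β γ
        + τ (k + 1) ℓ α β γ * τ (k - 1) (ℓ - 1) (α + 1) β γ)
    (hB : ∀ k ℓ α β γ : ℤ,
      τ (k + 1) (ℓ - 1) α (β + 1) γ * τ k ℓ α β γ
        + τ k (ℓ - 1) α β γ * τ (k + 1) ℓ α (β + 1) γ
      = τ (k + 1) ℓ α β γ * τ k (ℓ - 1) α (β + 1) γ)
    (hC : ∀ k ℓ α β γ : ℤ,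
      τ (k - 1) (ℓ - 1) α β γ * τ k (ℓ + 1) α β (γ + 1)
        + τ (k - 1) ℓ α β γ * τ k ℓ α β (γ + 1)
      = τ (k - 1) ℓ α β (γ + 1) * τ k ℓ α β γ)
    (hdeg6 : ∀ k ℓ : ℤ, 0 ≤ k → 0 ≤ ℓ → ∀ α β γ : ℤ,
      - (τ k (ℓ - 1) α β γ * τ k ℓ (α + 1) β γ * τ k ℓ (α + 1) (β + 1) γ *
          τ k ℓ (α + 1) (β + 1) (γ + 1) * τ (k + 1) ℓ α (β + 1) (γ + 1) *
          τ (k + 2) (ℓ + 1) α β (γ + 1))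
      + τ (k - 1) (ℓ - 1) (α + 1) (β + 1) γ * τ k ℓ (α + 1) β γ *
          τ (k + 1) ℓ α β γ * τ (k + 1) ℓ α β (γ + 1) *
          τ (k + 1) ℓ α (β + 1) (γ + 1) * τ (k + 1) (ℓ + 1) (α + 1) (β + 1) (γ + 1)
      - τ (k - 1) ℓ (α + 1) β γ * τ k ℓ (α + 1) (β + 1) (γ + 1) *
          τ (k + 1) ℓ α β γ * τ (k + 1) ℓ α β (γ + 1) *
          τ (k + 1) ℓ α (β + 1) (γ + 1) * τ (k + 1) ℓ (α + 1) (β + 1) γ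
      + τ k ℓ α (β + 1) (γ + 1) * τ k ℓ (α + 1) β γ * τ k ℓ (α + 1) (β + 1) γ *
          τ (k + 1) ℓ α β γ * τ (k + 1) ℓ α β (γ + 1) *
          τ (k + 1) ℓ (α + 1) (β + 1) (γ + 1)
      + τ k ℓ α β (γ + 1) * τ k ℓ (α + 1) β γ * τ k ℓ (α + 1) (β + 1) γ *
          τ k ℓ (α + 1) (β + 1) (γ + 1) * τ (k + 1) ℓ α β γ *
          τ (k + 2) ℓ α (β + 1) (γ + 1)
      - τ k ℓ α β γ * τ k ℓ (α + 1) (β + 1) γ * τ k ℓ (α + 1) (β + 1) (γ + 1) *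
          τ (k + 1) ℓ α β (γ + 1) * τ (k + 1) ℓ α (β + 1) (γ + 1) *
          τ (k + 1) ℓ (α + 1) β γ
      = 0) :
    ∀ k ℓ : ℤ, 0 ≤ k → 0 ≤ ℓ → ∀ α β γ : ℤ,
      τ k ℓ α β γ * τ k ℓ (α + 1) (β + 1) (γ + 1)
      = τ k ℓ (α + 1) β γ * τ k ℓ α (β + 1) (γ + 1)
        + τ (k + 1) (ℓ + 1) α (β + 1) (γ + 1) * τ (k - 1) (ℓ - 1) (α + 1) β γ
        - τ (k + 1) ℓ α (β + 1) (γ + 1) * τ (k - 1) ℓ (α + 1) β γ := by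
  suffices H : ∀ n : ℕ, ∀ ℓ : ℤ, 0 ≤ ℓ → ∀ α β γ : ℤ,
      τ (n : ℤ) ℓ α β γ * τ (n : ℤ) ℓ (α + 1) (β + 1) (γ + 1)
      = τ (n : ℤ) ℓ (α + 1) β γ * τ (n : ℤ) ℓ α (β + 1) (γ + 1)
        + τ ((n : ℤ) + 1) (ℓ + 1) α (β + 1) (γ + 1) * τ ((n : ℤ) - 1) (ℓ - 1) (α + 1) β γ
        - τ ((n : ℤ) + 1) ℓ α (β + 1) (γ + 1) * τ ((n : ℤ) - 1) ℓ (α + 1) β γ by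
    intro k ℓ hk hℓ α β γ
    obtain ⟨n, rfl⟩ := Int.eq_ofNat_of_zero_le hk
    exact H n ℓ hℓ α β γ
  intro n
  induction n with
  | zero =>
    intro ℓ hℓ α β γ
    push_cast
    have z1 : τ (-1) (ℓ - 1) (α + 1) β γ = 0 :=
      hzero (-1) (ℓ - 1) (α + 1) β γ (Or.inl (by norm_num))
    have z2 : τ (-1) ℓ (α + 1) β γ = 0 :=
      hzero (-1) ℓ (α + 1) β γ (Or.inl (by norm_num))
    have ha1 : τ 0 ℓ α β γ = τ 0 ℓ (α + 1) β γ := halpha ℓ α (α + 1) β γ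
    have ha2 : τ 0 ℓ α (β + 1) (γ + 1) = τ 0 ℓ (α + 1) (β + 1) (γ + 1) :=
      halpha ℓ α (α + 1) (β + 1) (γ + 1)
    linear_combination τ 0 ℓ (α + 1) (β + 1) (γ + 1) * ha1 - τ 0 ℓ (α + 1) β γ * ha2
      - τ 1 (ℓ + 1) α (β + 1) (γ + 1) * z1 + τ 1 ℓ α (β + 1) (γ + 1) * z2
  | succ m ih =>
    intro ℓ hℓ α β γ
    have hm : (0 : ℤ) ≤ (m : ℤ) := Int.natCast_nonneg m
    push_cast
    have e1 : (m : ℤ) + 1 + 1 = (m : ℤ) + 2 := by ring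
    have e2 : (m : ℤ) + 1 - 1 = (m : ℤ) := by ring
    have e3 : (m : ℤ) - 1 + 1 = (m : ℤ) := by ring
    have e4 : (ℓ : ℤ) + 1 - 1 = ℓ := by ring
    have H6 := hdeg6 (m : ℤ) ℓ hm hℓ α β γ
    have HB1 := hB ((m : ℤ) + 1) (ℓ + 1) α β (γ + 1)
    have HC0 := hC ((m : ℤ) + 1) ℓ α β γ
    have HA0 := hA (m : ℤ) ℓ α β γ
    have HG := ih ℓ hℓ α β γ
    have HC12 := hC ((m : ℤ) + 1) ℓ (α + 1) (β + 1) γ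
    have HA23 := hA ((m : ℤ) + 1) (ℓ + 1) α (β + 1) (γ + 1)
    have HB1' := hB ((m : ℤ) - 1) ℓ (α + 1) β γ
    simp only [e1, e2, e3, e4] at HB1 HC0 HC12 HA23 HB1' ⊢
    have hM : τ ((m : ℤ) + 1) ℓ α β (γ + 1) * (τ (m : ℤ) ℓ α β γ *
        (τ (m : ℤ) ℓ (α + 1) (β + 1) γ * τ (m : ℤ) ℓ (α + 1) (β + 1) (γ + 1))) ≠ 0 :=
      mul_ne_zero (hne _ _ _ _ _ (by linarith) hℓ)
        (mul_ne_zero (hne _ _ _ _ _ hm hℓ)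
          (mul_ne_zero (hne _ _ _ _ _ hm hℓ) (hne _ _ _ _ _ hm hℓ)))
    apply mul_left_cancel₀ hM
    linear_combination H6
      - (τ (m : ℤ) (ℓ - 1) α β γ * τ (m : ℤ) ℓ (α + 1) β γ * τ (m : ℤ) ℓ (α + 1) (β + 1) γ *
          τ (m : ℤ) ℓ (α + 1) (β + 1) (γ + 1)) * HB1
      + (τ (m : ℤ) ℓ (α + 1) β γ * τ (m : ℤ) ℓ (α + 1) (β + 1) γ *
          τ (m : ℤ) ℓ (α + 1) (β + 1) (γ + 1) * τ ((m : ℤ) + 2) ℓ α (β + 1) (γ + 1)) * HC0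
      - (τ ((m : ℤ) + 1) ℓ α β (γ + 1) * τ (m : ℤ) ℓ (α + 1) (β + 1) γ *
          τ (m : ℤ) ℓ (α + 1) (β + 1) (γ + 1) * τ ((m : ℤ) + 2) (ℓ + 1) α (β + 1) (γ + 1)) * HA0
      + (τ ((m : ℤ) + 1) ℓ α β (γ + 1) * τ ((m : ℤ) + 1) ℓ α β γ *
          τ (m : ℤ) ℓ (α + 1) (β + 1) γ * τ ((m : ℤ) + 1) ℓ (α + 1) (β + 1) (γ + 1)) * HG
      - (τ ((m : ℤ) + 1) ℓ α β (γ + 1) * τ ((m : ℤ) + 1) ℓ α β γ *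
          τ ((m : ℤ) - 1) ℓ (α + 1) β γ * τ ((m : ℤ) + 1) ℓ α (β + 1) (γ + 1)) * HC12
      + (τ ((m : ℤ) + 1) ℓ α β (γ + 1) * τ ((m : ℤ) + 1) ℓ α β γ *
          τ ((m : ℤ) - 1) (ℓ - 1) (α + 1) β γ * τ (m : ℤ) ℓ (α + 1) (β + 1) γ) * HA23
      + (τ ((m : ℤ) + 1) ℓ α β (γ + 1) * τ ((m : ℤ) + 1) ℓ α β γ *
          τ ((m : ℤ) + 1) ℓ α (β + 1) (γ + 1) * τ ((m : ℤ) + 1) (ℓ + 1) (α + 1) (β + 1) (γ + 1)) * HB1'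
end
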